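/- arXiv:2408.03924 — 2 statements merged into one kernel-verified Lean document; each statement's English description precedes it below -/
import Mathlib

section
/- Leibniz rule for divided differences of exponentials: for every integer q ≥ 0, every tuple (x_0, …, x_q) of real numbers, and all real numbers s and t, one has e^{(s+t)[x_0, …, x_q]} = Σ_{j=0}^{q} e^{s[x_0, …, x_j]} · e^{t[x_j, …, x_q]}. -/
open scoped BigOperators

/-- Complete homogeneous symmetric polynomial of degree `m` in the entries of the list `l`:
`h_m(x_0, …, x_q) = Σ_{k_0+⋯+k_q = m} x_0^{k_0}⋯x_q^{k_q}` (with `h_0 = 1`). -/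
noncomputable def hsymm (l : List ℝ) (m : ℕ) : ℝ :=
  ∑ k ∈ Finset.Nat.antidiagonalTuple l.length m, ∏ i : Fin l.length, l.get i ^ k i

/-- Divided difference of the exponential `e^{t[x_0, …, x_q]}` over the tuple given by the
list `l` (of length `q+1`), defined by its (absolutely convergent) series
`Σ_{m=0}^∞ (t^{q+m}/(q+m)!) · h_m(x_0, …, x_q)`; by convention it is `0` on the empty tuple. -/
noncomputable def dde (t : ℝ) (l : List ℝ) : ℝ :=
  if l.length = 0 then 0
  else ∑' m : ℕ, t ^ (l.length - 1 + m) / (Nat.factorial (l.length - 1 + m)) * hsymm l m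

/-- The sub-tuple `[x_a, …, x_b]` of the sequence `x`, as a list (empty if `b < a`). -/
def seg (x : ℕ → ℝ) (a b : ℕ) : List ℝ :=
  (List.range (b + 1 - a)).map (fun i => x (a + i))

/-! ### Elementary lemmas about `hsymm` -/

lemma hsymm_nil (m : ℕ) : hsymm [] m = if m = 0 then 1 else 0 := by
  cases m with
  | zero => simp [hsymm]
  | succ n => simp [hsymm]

lemma hsymm_zero (l : List ℝ) : hsymm l 0 = 1 := by
  simp [hsymm, Finset.Nat.antidiagonalTuple_zero_right]

lemma hsymm_cons (y : ℝ) (l : List ℝ) (m : ℕ) :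
    hsymm (y :: l) m = ∑ p ∈ Finset.HasAntidiagonal.antidiagonal m, y ^ p.1 * hsymm l p.2 := by
  unfold hsymm
  simp only [List.length_cons]
  simp_rw [Finset.mul_sum]
  rw [Finset.sum_sigma' (Finset.HasAntidiagonal.antidiagonal m)
    (fun p => Finset.Nat.antidiagonalTuple l.length p.2)
    (fun p k => y ^ p.1 * ∏ i : Fin l.length, l.get i ^ k i)]
  refine (Finset.sum_nbij' (fun pk => Fin.cons pk.1.1 pk.2)
    (fun k => ⟨(k 0, ∑ i : Fin l.length, k i.succ), Fin.tail k⟩) ?_ ?_ ?_ ?_ ?_).symm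
  · rintro ⟨⟨a, b⟩, k⟩ hk
    simp only [Finset.mem_sigma, Finset.HasAntidiagonal.mem_antidiagonal,
      Finset.Nat.mem_antidiagonalTuple] at hk ⊢
    rw [Fin.sum_univ_succ]
    simp [Fin.cons, hk.2, hk.1]
  · intro k hk
    simp only [Finset.Nat.mem_antidiagonalTuple, Finset.mem_sigma,
      Finset.HasAntidiagonal.mem_antidiagonal] at hk ⊢
    constructor
    · rw [← hk, Fin.sum_univ_succ]
    · rfl
  · rintro ⟨⟨a, b⟩, k⟩ hk
    simp only [Finset.mem_sigma, Finset.HasAntidiagonal.mem_antidiagonal,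
      Finset.Nat.mem_antidiagonalTuple] at hk
    have h3 : ∑ i : Fin l.length, (Fin.cons (α := fun _ => ℕ) a k) i.succ = b := by
      simp [hk.2]
    ext <;> simp [h3, Fin.tail_cons, hk.2]
  · intro k hk
    exact Fin.cons_self_tail k
  · rintro ⟨⟨a, b⟩, k⟩ hk
    rw [Fin.prod_univ_succ]
    congr 1

lemma hsymm_cons_succ (y : ℝ) (l : List ℝ) (m : ℕ) :
    hsymm (y :: l) (m + 1) = y * hsymm (y :: l) m + hsymm l (m + 1) := by
  rw [hsymm_cons, hsymm_cons, Finset.Nat.antidiagonal_succ, Finset.sum_cons,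
    Finset.sum_map, Finset.mul_sum]
  rw [add_comm]
  congr 1
  · apply Finset.sum_congr rfl
    intro p hp
    simp [Function.Embedding.prodMap, pow_succ]
    ring
  · simp

lemma hsymm_singleton (y : ℝ) (m : ℕ) : hsymm [y] m = y ^ m := by
  induction m with
  | zero => simpa using hsymm_zero [y]
  | succ n ih =>
      rw [hsymm_cons_succ, ih, hsymm_nil, pow_succ]
      simp [mul_comm]

/-! ### Elementary lemmas about `seg` -/

lemma seg_length (x : ℕ → ℝ) (a b : ℕ) : (seg x a b).length = b + 1 - a := by
  simp [seg]

lemma seg_nil (x : ℕ → ℝ) (a b : ℕ) (h : b < a) : seg x a b = [] := by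
  simp [seg, Nat.sub_eq_zero_of_le h]

lemma seg_cons (x : ℕ → ℝ) (a b : ℕ) (h : a ≤ b) :
    seg x a b = x a :: seg x (a + 1) b := by
  have h1 : b + 1 - a = (b - a) + 1 := by omega
  have h2 : b + 1 - (a + 1) = b - a := by omega
  rw [seg, h1, List.range_succ_eq_map, List.map_cons, List.map_map, seg, h2]
  congr 1
  apply List.map_congr_left
  intro i hi
  show x (a + (i + 1)) = x (a + 1 + i)
  congr 1
  omega

lemma seg_singleton (x : ℕ → ℝ) (a : ℕ) : seg x a a = [x a] := by
  rw [seg_cons x a a le_rfl, seg_nil x (a+1) a (by omega)]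

/-! ### The bidiagonal matrix whose powers encode the `hsymm` polynomials -/

noncomputable def Mx (q : ℕ) (x : ℕ → ℝ) : Matrix (Fin (q+1)) (Fin (q+1)) ℝ :=
  Matrix.of fun i j => if i = j then x (i:ℕ) else if (i:ℕ) + 1 = (j:ℕ) then 1 else 0

lemma Mx_pow (q : ℕ) (x : ℕ → ℝ) (m : ℕ) (i j : Fin (q+1)) :
    (Mx q x ^ m) i j =
      if (i:ℕ) ≤ (j:ℕ) ∧ (j:ℕ) - (i:ℕ) ≤ m then
        hsymm (seg x (i:ℕ) (j:ℕ)) (m - ((j:ℕ) - (i:ℕ))) else 0 := by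
  induction m generalizing i j with
  | zero =>
    simp only [pow_zero, Matrix.one_apply]
    by_cases hij : i = j
    · subst hij
      rw [if_pos (⟨le_rfl, by omega⟩ : (i:ℕ) ≤ (i:ℕ) ∧ (i:ℕ) - (i:ℕ) ≤ 0),
        if_pos rfl]
      simp [seg_singleton, hsymm_zero]
    · rw [if_neg hij, if_neg]
      rintro ⟨h1, h2⟩
      exact hij (Fin.ext (by omega))
  | succ m ih =>
    rw [pow_succ', Matrix.mul_apply]
    have split : ∀ k : Fin (q+1), Mx q x i k * (Mx q x ^ m) k j
        = (if i = k then x (i:ℕ) else 0) * (Mx q x ^ m) k j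
          + (if (i:ℕ) + 1 = (k:ℕ) then (1:ℝ) else 0) * (Mx q x ^ m) k j := by
      intro k
      show (if i = k then x (i:ℕ) else if (i:ℕ) + 1 = (k:ℕ) then 1 else 0) * _ = _
      by_cases h1 : i = k
      · have : ¬((i:ℕ) + 1 = (k:ℕ)) := by subst h1; omega
        simp [h1, this]
      · simp [h1]
    rw [Finset.sum_congr rfl (fun k _ => split k), Finset.sum_add_distrib]
    have first : (∑ k : Fin (q+1), (if i = k then x (i:ℕ) else 0) * (Mx q x ^ m) k j)
        = x (i:ℕ) * (Mx q x ^ m) i j := by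
      rw [Finset.sum_eq_single i]
      · simp
      · intro k _ hk
        rw [if_neg (fun h => hk h.symm), zero_mul]
      · simp
    rw [first]
    by_cases hq : (i:ℕ) < q
    · set i' : Fin (q+1) := ⟨(i:ℕ)+1, by omega⟩ with hi'
      have hi'v : (i':ℕ) = (i:ℕ) + 1 := rfl
      have second : (∑ k : Fin (q+1), (if (i:ℕ) + 1 = (k:ℕ) then (1:ℝ) else 0) * (Mx q x ^ m) k j)
          = (Mx q x ^ m) i' j := by
        rw [Finset.sum_eq_single i']
        · rw [if_pos hi'v.symm, one_mul]
        · intro k _ hk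
          rw [if_neg, zero_mul]
          intro hc
          exact hk (Fin.ext (by rw [hi'v, ← hc]))
        · simp
      rw [second, ih i j, ih i' j]
      by_cases hij : (i:ℕ) ≤ (j:ℕ)
      · by_cases hd1 : m + 1 < (j:ℕ) - (i:ℕ)
        · have c1 : ¬((i:ℕ) ≤ (j:ℕ) ∧ (j:ℕ) - (i:ℕ) ≤ m) := by omega
          have c2 : ¬((i':ℕ) ≤ (j:ℕ) ∧ (j:ℕ) - (i':ℕ) ≤ m) := by omega
          have c3 : ¬((i:ℕ) ≤ (j:ℕ) ∧ (j:ℕ) - (i:ℕ) ≤ m + 1) := by omega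
          rw [if_neg c1, if_neg c2, if_neg c3]; ring
        · by_cases hd2 : (j:ℕ) - (i:ℕ) = m + 1
          · have c1 : ¬((i:ℕ) ≤ (j:ℕ) ∧ (j:ℕ) - (i:ℕ) ≤ m) := by omega
            have c2 : (i':ℕ) ≤ (j:ℕ) ∧ (j:ℕ) - (i':ℕ) ≤ m := by omega
            have c3 : (i:ℕ) ≤ (j:ℕ) ∧ (j:ℕ) - (i:ℕ) ≤ m + 1 := by omega
            rw [if_neg c1, if_pos c2, if_pos c3]
            have e1 : m - ((j:ℕ) - (i':ℕ)) = 0 := by omega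
            have e2 : m + 1 - ((j:ℕ) - (i:ℕ)) = 0 := by omega
            rw [e1, e2, hsymm_zero, hsymm_zero]; ring
          · have hdm : (j:ℕ) - (i:ℕ) ≤ m := by omega
            by_cases hieq : (i:ℕ) = (j:ℕ)
            · have hfin : i = j := Fin.ext hieq
              subst hfin
              have c1 : (i:ℕ) ≤ (i:ℕ) ∧ (i:ℕ) - (i:ℕ) ≤ m := by omega
              have c2 : ¬((i':ℕ) ≤ (i:ℕ) ∧ (i:ℕ) - (i':ℕ) ≤ m) := by omega
              have c3 : (i:ℕ) ≤ (i:ℕ) ∧ (i:ℕ) - (i:ℕ) ≤ m + 1 := by omega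
              rw [if_pos c1, if_neg c2, if_pos c3, Nat.sub_self, Nat.sub_zero, Nat.sub_zero,
                seg_singleton, hsymm_singleton, hsymm_singleton, pow_succ]
              ring
            · have hlt : (i:ℕ) < (j:ℕ) := lt_of_le_of_ne hij hieq
              have c1 : (i:ℕ) ≤ (j:ℕ) ∧ (j:ℕ) - (i:ℕ) ≤ m := ⟨hij, hdm⟩
              have c2 : (i':ℕ) ≤ (j:ℕ) ∧ (j:ℕ) - (i':ℕ) ≤ m := by omega
              have c3 : (i:ℕ) ≤ (j:ℕ) ∧ (j:ℕ) - (i:ℕ) ≤ m + 1 := by omega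
              rw [if_pos c1, if_pos c2, if_pos c3]
              have e1 : m + 1 - ((j:ℕ) - (i:ℕ)) = (m - ((j:ℕ) - (i:ℕ))) + 1 := by omega
              have e2 : m - ((j:ℕ) - (i':ℕ)) = (m - ((j:ℕ) - (i:ℕ))) + 1 := by omega
              rw [e1, e2, hi'v, seg_cons x (i:ℕ) (j:ℕ) hij, hsymm_cons_succ]
      · have c1 : ¬((i:ℕ) ≤ (j:ℕ) ∧ (j:ℕ) - (i:ℕ) ≤ m) := by omega
        have c2 : ¬((i':ℕ) ≤ (j:ℕ) ∧ (j:ℕ) - (i':ℕ) ≤ m) := by omega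
        have c3 : ¬((i:ℕ) ≤ (j:ℕ) ∧ (j:ℕ) - (i:ℕ) ≤ m + 1) := by omega
        rw [if_neg c1, if_neg c2, if_neg c3]; ring
    · have hiq : (i:ℕ) = q := by omega
      have second : (∑ k : Fin (q+1), (if (i:ℕ) + 1 = (k:ℕ) then (1:ℝ) else 0) * (Mx q x ^ m) k j)
          = 0 := by
        apply Finset.sum_eq_zero
        intro k _
        rw [if_neg (by omega), zero_mul]
      rw [second, add_zero, ih i j]
      by_cases hij : (j:ℕ) = q
      · have hfin : i = j := Fin.ext (by omega)
        subst hfin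
        have c1 : (i:ℕ) ≤ (i:ℕ) ∧ (i:ℕ) - (i:ℕ) ≤ m := by omega
        have c3 : (i:ℕ) ≤ (i:ℕ) ∧ (i:ℕ) - (i:ℕ) ≤ m + 1 := by omega
        rw [if_pos c1, if_pos c3, Nat.sub_self, Nat.sub_zero, Nat.sub_zero,
          seg_singleton, hsymm_singleton, hsymm_singleton, pow_succ]
        ring
      · have c1 : ¬((i:ℕ) ≤ (j:ℕ) ∧ (j:ℕ) - (i:ℕ) ≤ m) := by
          have : (j:ℕ) < q + 1 := j.isLt
          omega
        have c3 : ¬((i:ℕ) ≤ (j:ℕ) ∧ (j:ℕ) - (i:ℕ) ≤ m + 1) := by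
          have : (j:ℕ) < q + 1 := j.isLt
          omega
        rw [if_neg c1, if_neg c3]; ring

/-! ### Bounds and summability -/

noncomputable def Bx (q : ℕ) (x : ℕ → ℝ) : ℝ := 1 + ∑ i : Fin (q+1), |x (i:ℕ)|

lemma Bx_ge_one (q : ℕ) (x : ℕ → ℝ) : 1 ≤ Bx q x := by
  have : 0 ≤ ∑ i : Fin (q+1), |x (i:ℕ)| :=
    Finset.sum_nonneg fun i _ => abs_nonneg _
  simp [Bx]; linarith

lemma Mx_entry_bound (q : ℕ) (x : ℕ → ℝ) (i j : Fin (q+1)) : |Mx q x i j| ≤ Bx q x := by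
  show |if i = j then x (i:ℕ) else if (i:ℕ) + 1 = (j:ℕ) then 1 else 0| ≤ Bx q x
  have h1 : |x (i:ℕ)| ≤ Bx q x := by
    have := Finset.single_le_sum (f := fun k : Fin (q+1) => |x (k:ℕ)|)
      (fun k _ => abs_nonneg _) (Finset.mem_univ i)
    simp only [Bx]; linarith
  have h0 : (0:ℝ) ≤ Bx q x := le_trans zero_le_one (Bx_ge_one q x)
  split_ifs
  · exact h1
  · simpa using Bx_ge_one q x
  · simpa using h0

lemma Mx_pow_bound (q : ℕ) (x : ℕ → ℝ) (m : ℕ) (i j : Fin (q+1)) :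
    |(Mx q x ^ m) i j| ≤ ((q+1) * Bx q x) ^ m := by
  induction m generalizing i j with
  | zero =>
    simp only [pow_zero, Matrix.one_apply]
    split_ifs <;> simp
  | succ m ih =>
    rw [pow_succ', Matrix.mul_apply]
    calc |∑ k : Fin (q+1), Mx q x i k * (Mx q x ^ m) k j|
        ≤ ∑ k : Fin (q+1), |Mx q x i k * (Mx q x ^ m) k j| := Finset.abs_sum_le_sum_abs _ _
      _ ≤ ∑ _k : Fin (q+1), Bx q x * ((q+1) * Bx q x) ^ m := by
          apply Finset.sum_le_sum
          intro k _
          rw [abs_mul]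
          exact mul_le_mul (Mx_entry_bound q x i k) (ih k j) (abs_nonneg _)
            (le_trans zero_le_one (Bx_ge_one q x))
      _ = (q+1) * (Bx q x * ((q+1) * Bx q x) ^ m) := by
          rw [Finset.sum_const, Finset.card_univ, Fintype.card_fin]
          ring
      _ = ((q+1) * Bx q x) ^ (m+1) := by rw [pow_succ]; ring

lemma Mx_summable_norm (q : ℕ) (x : ℕ → ℝ) (t : ℝ) (i j : Fin (q+1)) :
    Summable (fun m => ‖t ^ m / (Nat.factorial m) * (Mx q x ^ m) i j‖) := by
  refine Summable.of_nonneg_of_le (fun m => norm_nonneg _) (fun m => ?_)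
    (Real.summable_pow_div_factorial (|t| * ((q+1) * Bx q x)))
  rw [Real.norm_eq_abs, abs_mul, abs_div, abs_pow,
    abs_of_nonneg (by positivity : (0:ℝ) ≤ (Nat.factorial m : ℝ)), mul_pow]
  calc |t| ^ m / (Nat.factorial m) * |(Mx q x ^ m) i j|
      ≤ |t| ^ m / (Nat.factorial m) * ((q+1) * Bx q x) ^ m :=
        mul_le_mul_of_nonneg_left (Mx_pow_bound q x m i j) (by positivity)
    _ = |t| ^ m * ((q+1) * Bx q x) ^ m / (Nat.factorial m) := by ring

/-! ### The entrywise exponential series and its identification with `dde` -/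

noncomputable def Ex (q : ℕ) (x : ℕ → ℝ) (t : ℝ) (i j : Fin (q+1)) : ℝ :=
  ∑' m : ℕ, t ^ m / (Nat.factorial m) * (Mx q x ^ m) i j

lemma Ex_eq_dde (q : ℕ) (x : ℕ → ℝ) (t : ℝ) (i j : Fin (q+1)) (hij : (i:ℕ) ≤ (j:ℕ)) :
    Ex q x t i j = dde t (seg x (i:ℕ) (j:ℕ)) := by
  have hlen : (seg x (i:ℕ) (j:ℕ)).length = (j:ℕ) - (i:ℕ) + 1 := by rw [seg_length]; omega
  rw [dde, if_neg (by rw [hlen]; omega), hlen]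
  simp only [Nat.add_sub_cancel]
  set d := (j:ℕ) - (i:ℕ) with hd
  rw [Ex, ← Function.Injective.tsum_eq (g := fun m : ℕ => d + m)
    (fun a b h => by simpa using h) ?_]
  · apply tsum_congr
    intro c
    rw [Mx_pow, if_pos ⟨hij, by omega⟩, ← hd, Nat.add_sub_cancel_left]
  · intro n hn
    simp only [Function.mem_support] at hn
    rcases le_or_gt d n with h | h
    · refine ⟨n - d, ?_⟩
      show d + (n - d) = n
      omega
    · exfalso
      apply hn
      rw [Mx_pow, ← hd, if_neg (by omega)]
      ring

lemma add_pow_div_factorial (s t : ℝ) (m : ℕ) :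
    (s + t) ^ m / (Nat.factorial m)
      = ∑ p ∈ Finset.HasAntidiagonal.antidiagonal m,
          (s ^ p.1 / (Nat.factorial p.1)) * (t ^ p.2 / (Nat.factorial p.2)) := by
  rw [Commute.add_pow' (Commute.all s t), Finset.sum_div]
  apply Finset.sum_congr rfl
  intro p hp
  rw [Finset.HasAntidiagonal.mem_antidiagonal] at hp
  have keyN : Nat.choose m p.1 * Nat.factorial p.1 * Nat.factorial p.2 = Nat.factorial m := by
    rw [← hp, add_comm p.1 p.2, ← Nat.add_choose_mul_factorial_mul_factorial p.2 p.1]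
    ring
  rw [nsmul_eq_mul]
  have h1 : (Nat.factorial p.1 : ℝ) ≠ 0 := Nat.cast_ne_zero.mpr (Nat.factorial_ne_zero _)
  have h2 : (Nat.factorial p.2 : ℝ) ≠ 0 := Nat.cast_ne_zero.mpr (Nat.factorial_ne_zero _)
  have h3 : (Nat.factorial m : ℝ) ≠ 0 := Nat.cast_ne_zero.mpr (Nat.factorial_ne_zero _)
  field_simp
  push_cast [← keyN]
  ring

/-- **Leibniz rule for divided differences of exponentials**: for every `q ≥ 0`, tuple
`(x_0, …, x_q)` and reals `s`, `t`,
`e^{(s+t)[x_0,…,x_q]} = Σ_{j=0}^{q} e^{s[x_0,…,x_j]} · e^{t[x_j,…,x_q]}`. -/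
theorem dde_leibniz (q : ℕ) (x : ℕ → ℝ) (s t : ℝ) :
    dde (s + t) (seg x 0 q)
      = ∑ j ∈ Finset.range (q + 1), dde s (seg x 0 j) * dde t (seg x j q) := by
  set i0 : Fin (q+1) := ⟨0, by omega⟩ with hi0
  set iq : Fin (q+1) := ⟨q, by omega⟩ with hiq
  have hL : dde (s + t) (seg x 0 q) = Ex q x (s + t) i0 iq :=
    (Ex_eq_dde q x (s+t) i0 iq (by simp [hi0, hiq])).symm
  have hR : ∀ j : Fin (q+1),
      dde s (seg x 0 (j:ℕ)) * dde t (seg x (j:ℕ) q)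
        = Ex q x s i0 j * Ex q x t j iq := by
    intro j
    rw [Ex_eq_dde q x s i0 j (by simp [hi0]), Ex_eq_dde q x t j iq (by
      simp only [hiq]; exact Nat.lt_succ_iff.mp j.isLt)]
  rw [hL, ← Fin.sum_univ_eq_sum_range (fun j => dde s (seg x 0 j) * dde t (seg x j q)) (q+1)]
  rw [Finset.sum_congr rfl (fun j _ => hR j)]
  have cauchy : ∀ j : Fin (q+1), Ex q x s i0 j * Ex q x t j iq
      = ∑' m : ℕ, ∑ p ∈ Finset.HasAntidiagonal.antidiagonal m,
          (s ^ p.1 / (Nat.factorial p.1) * (Mx q x ^ p.1) i0 j)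
            * (t ^ p.2 / (Nat.factorial p.2) * (Mx q x ^ p.2) j iq) := fun j =>
    tsum_mul_tsum_eq_tsum_sum_antidiagonal_of_summable_norm
      (Mx_summable_norm q x s i0 j) (Mx_summable_norm q x t j iq)
  rw [Finset.sum_congr rfl (fun j _ => cauchy j), ← Summable.tsum_finsetSum (fun j _ =>
    ((summable_norm_sum_mul_antidiagonal_of_summable_norm
      (Mx_summable_norm q x s i0 j) (Mx_summable_norm q x t j iq)).of_norm))]
  apply tsum_congr
  intro m
  rw [Finset.sum_comm]
  have inner : ∀ p : ℕ × ℕ, p ∈ Finset.HasAntidiagonal.antidiagonal m →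
      (∑ j : Fin (q+1),
        (s ^ p.1 / (Nat.factorial p.1) * (Mx q x ^ p.1) i0 j)
          * (t ^ p.2 / (Nat.factorial p.2) * (Mx q x ^ p.2) j iq))
      = (s ^ p.1 / (Nat.factorial p.1)) * (t ^ p.2 / (Nat.factorial p.2))
          * (Mx q x ^ m) i0 iq := by
    intro p hp
    rw [Finset.HasAntidiagonal.mem_antidiagonal] at hp
    have : (Mx q x ^ m) i0 iq = ∑ j : Fin (q+1), (Mx q x ^ p.1) i0 j * (Mx q x ^ p.2) j iq := by
      rw [← Matrix.mul_apply, ← pow_add, hp]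
    rw [this, Finset.mul_sum]
    apply Finset.sum_congr rfl
    intro j _
    ring
  rw [Finset.sum_congr rfl inner, ← Finset.sum_mul, ← add_pow_div_factorial]
end

section
/- Integral representation of the ground-state fidelity susceptibility: under the stated assumptions, the function τ ↦ τ·G(τ) is integrable on (0, ∞) and ∫_0^∞ τ · G(τ) dτ = Σ_{n=1}^{N−1} |⟨ψ_n, A ψ_0⟩|² / (E_n − E_0)², i.e. it equals the spectral fidelity susceptibility χ_F = Σ_{n≠0} |⟨ψ_n, A ψ_0⟩|² / (E_n − E_0)². -/
open scoped BigOperators InnerProductSpace Nat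

open NormedSpace in
lemma exp_apply_eigenvector_aux {V : Type*} [NormedAddCommGroup V] [InnerProductSpace ℂ V]
    [FiniteDimensional ℂ V] (T : V →L[ℂ] V) (x : V) (c : ℂ) (h : T x = c • x) :
    NormedSpace.exp T x = Complex.exp c • x := by
  have hpow : ∀ n : ℕ, (T ^ n) x = c ^ n • x := by
    intro n
    induction n with
    | zero => simp
    | succ n ih =>
        rw [pow_succ, pow_succ, ContinuousLinearMap.mul_apply, h, _root_.map_smul, ih,
          smul_smul, mul_comm c (c ^ n)]
  have hsum : Summable fun n : ℕ => ((n !⁻¹ : ℂ) • T ^ n) := expSeries_summable' T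
  have happ := (ContinuousLinearMap.apply ℂ V x).map_tsum hsum
  have hsum2 : Summable fun n : ℕ => ((n !⁻¹ : ℂ) * c ^ n) := by
    simpa [smul_eq_mul] using expSeries_summable' (𝕂 := ℂ) (𝔸 := ℂ) c
  calc NormedSpace.exp T x = (∑' n : ℕ, (n !⁻¹ : ℂ) • T ^ n) x := by
        rw [NormedSpace.exp_eq_tsum (𝕂 := ℂ)]
    _ = ∑' n : ℕ, ((n !⁻¹ : ℂ) • T ^ n) x := happ
    _ = ∑' n : ℕ, ((n !⁻¹ : ℂ) * c ^ n) • x := by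
        simp_rw [ContinuousLinearMap.smul_apply, hpow, smul_smul]
    _ = (∑' n : ℕ, (n !⁻¹ : ℂ) * c ^ n) • x := hsum2.tsum_smul_const x
    _ = Complex.exp c • x := by
        rw [Complex.exp_eq_exp_ℂ, NormedSpace.exp_eq_tsum (𝕂 := ℂ)]
        simp [smul_eq_mul]

open MeasureTheory in
/-- **Integral representation of the ground-state fidelity susceptibility**: let `V` be a
finite-dimensional complex inner product space of dimension `N ≥ 1`, `H` a self-adjoint
operator with orthonormal eigenbasis `ψ`, `H ψ_n = E_n ψ_n`, nondegenerate ground state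
`E_0 < E_n` (`n ≠ 0`), and `A` self-adjoint. Then `τ ↦ τ·G(τ)`, with
`G(τ) = ⟨ψ_0, e^{τH} A e^{−τH} A ψ_0⟩ − ⟨ψ_0, A ψ_0⟩²`, is integrable on `(0, ∞)` and
`∫_0^∞ τ G(τ) dτ = Σ_{n≠0} |⟨ψ_n, A ψ_0⟩|² / (E_n − E_0)² = χ_F`. -/
theorem integral_representation_fidelity_susceptibility
    {V : Type*} [NormedAddCommGroup V] [InnerProductSpace ℂ V] [FiniteDimensional ℂ V]
    (N : ℕ) (hN : 1 ≤ N)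
    (H A : V →L[ℂ] V) (hH : IsSelfAdjoint H) (hA : IsSelfAdjoint A)
    (ψ : OrthonormalBasis (Fin N) ℂ V) (E : Fin N → ℝ)
    (heig : ∀ n, H (ψ n) = (E n : ℂ) • ψ n)
    (hground : ∀ n : Fin N, n ≠ ⟨0, hN⟩ → E ⟨0, hN⟩ < E n) :
    IntegrableOn (fun τ : ℝ =>
        (τ : ℂ) * (⟪ψ ⟨0, hN⟩,
            (NormedSpace.exp ((τ : ℂ) • H) * A * NormedSpace.exp (-(τ : ℂ) • H))
              (A (ψ ⟨0, hN⟩))⟫_ℂ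
          - ⟪ψ ⟨0, hN⟩, A (ψ ⟨0, hN⟩)⟫_ℂ ^ 2)) (Set.Ioi 0)
      ∧ ∫ τ in Set.Ioi (0:ℝ),
          (τ : ℂ) * (⟪ψ ⟨0, hN⟩,
              (NormedSpace.exp ((τ : ℂ) • H) * A * NormedSpace.exp (-(τ : ℂ) • H))
                (A (ψ ⟨0, hN⟩))⟫_ℂ
            - ⟪ψ ⟨0, hN⟩, A (ψ ⟨0, hN⟩)⟫_ℂ ^ 2)
        = ((∑ n ∈ Finset.univ.erase ⟨0, hN⟩,
              ‖⟪ψ n, A (ψ ⟨0, hN⟩)⟫_ℂ‖ ^ 2 / (E n - E ⟨0, hN⟩) ^ 2 : ℝ) : ℂ) := by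
  classical
  set z : Fin N := ⟨0, hN⟩ with hz
  set v : V := ψ z with hv
  have hsymm := hA.isSymmetric
  -- conjugate of the matrix element
  have hconj : ∀ n, ⟪v, A (ψ n)⟫_ℂ = (starRingEnd ℂ) ⟪ψ n, A v⟫_ℂ := by
    intro n
    rw [inner_conj_symm]
    exact (hsymm v (ψ n)).symm
  have hcz : (starRingEnd ℂ) ⟪v, A v⟫_ℂ = ⟪v, A v⟫_ℂ := by
    have := hconj z
    rw [← hv] at this
    exact this.symm
  -- the key pointwise identity
  have key : ∀ τ : ℝ,
      ⟪v, (NormedSpace.exp ((τ : ℂ) • H) * A * NormedSpace.exp (-(τ : ℂ) • H))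
          (A v)⟫_ℂ - ⟪v, A v⟫_ℂ ^ 2
        = ((∑ n ∈ Finset.univ.erase z,
            ‖⟪ψ n, A v⟫_ℂ‖ ^ 2 * Real.exp (-((E n - E z) * τ)) : ℝ) : ℂ) := by
    intro τ
    have e1 : ∀ n, NormedSpace.exp (-(τ : ℂ) • H) (ψ n)
        = Complex.exp ((-(τ * E n) : ℝ) : ℂ) • ψ n := by
      intro n
      refine exp_apply_eigenvector_aux _ _ _ ?_
      rw [ContinuousLinearMap.smul_apply, heig n, smul_smul]
      push_cast
      ring_nf
    have e0 : NormedSpace.exp ((τ : ℂ) • H) v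
        = Complex.exp (((τ * E z) : ℝ) : ℂ) • v := by
      refine exp_apply_eigenvector_aux _ _ _ ?_
      rw [hv, ContinuousLinearMap.smul_apply, heig z, smul_smul]
      push_cast
      ring_nf
    have hsH : IsSelfAdjoint ((τ : ℂ) • H) := by
      rw [IsSelfAdjoint, star_smul, hH.star_eq, Complex.star_def, Complex.conj_ofReal]
    have hexpSA : IsSelfAdjoint (NormedSpace.exp ((τ : ℂ) • H)) := by
      rw [IsSelfAdjoint, NormedSpace.star_exp, hsH.star_eq]
    have hAv : A v = ∑ n, ⟪ψ n, A v⟫_ℂ • ψ n := (ψ.sum_repr' (A v)).symm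
    have expand : (NormedSpace.exp ((τ : ℂ) • H) * A * NormedSpace.exp (-(τ : ℂ) • H))
        (A v) = NormedSpace.exp ((τ : ℂ) • H) (A (NormedSpace.exp (-(τ : ℂ) • H) (A v))) :=
      rfl
    have step1 : NormedSpace.exp (-(τ : ℂ) • H) (A v)
        = ∑ n, (⟪ψ n, A v⟫_ℂ * Complex.exp ((-(τ * E n) : ℝ) : ℂ)) • ψ n := by
      conv_lhs => rw [hAv, map_sum]
      refine Finset.sum_congr rfl fun n _ => ?_
      rw [_root_.map_smul, e1 n, smul_smul]
    have step2 : ⟪v, (NormedSpace.exp ((τ : ℂ) • H) * A * NormedSpace.exp (-(τ : ℂ) • H))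
          (A v)⟫_ℂ
        = Complex.exp (((τ * E z) : ℝ) : ℂ) *
            ∑ n, ⟪ψ n, A v⟫_ℂ * Complex.exp ((-(τ * E n) : ℝ) : ℂ) *
              (starRingEnd ℂ) ⟪ψ n, A v⟫_ℂ := by
      rw [expand, step1, map_sum, ← hexpSA.adjoint_eq,
        ContinuousLinearMap.adjoint_inner_right, e0, inner_smul_left, inner_sum]
      rw [← Complex.ofReal_exp, Complex.conj_ofReal, Complex.ofReal_exp]
      congr 1
      refine Finset.sum_congr rfl fun n _ => ?_
      rw [_root_.map_smul, inner_smul_right, hconj n]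
    have hterm : ∀ n, Complex.exp (((τ * E z) : ℝ) : ℂ) *
        (⟪ψ n, A v⟫_ℂ * Complex.exp ((-(τ * E n) : ℝ) : ℂ) *
          (starRingEnd ℂ) ⟪ψ n, A v⟫_ℂ)
        = ((‖⟪ψ n, A v⟫_ℂ‖ ^ 2 * Real.exp (-((E n - E z) * τ)) : ℝ) : ℂ) := by
      intro n
      have h1 : Complex.exp (((τ * E z) : ℝ) : ℂ) * Complex.exp ((-(τ * E n) : ℝ) : ℂ)
          = Complex.exp ((-((E n - E z) * τ) : ℝ) : ℂ) := by
        rw [← Complex.exp_add, ← Complex.ofReal_add]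
        congr 2
        ring
      calc Complex.exp (((τ * E z) : ℝ) : ℂ) *
            (⟪ψ n, A v⟫_ℂ * Complex.exp ((-(τ * E n) : ℝ) : ℂ) *
              (starRingEnd ℂ) ⟪ψ n, A v⟫_ℂ)
          = (⟪ψ n, A v⟫_ℂ * (starRingEnd ℂ) ⟪ψ n, A v⟫_ℂ) *
              (Complex.exp (((τ * E z) : ℝ) : ℂ) * Complex.exp ((-(τ * E n) : ℝ) : ℂ)) := by
            ring
        _ = ((‖⟪ψ n, A v⟫_ℂ‖ ^ 2 * Real.exp (-((E n - E z) * τ)) : ℝ) : ℂ) := by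
            rw [h1, RCLike.mul_conj, Complex.ofReal_mul, Complex.ofReal_pow,
              Complex.ofReal_exp]
            with_unfolding_all rfl
    rw [step2, Finset.mul_sum]
    rw [← Finset.add_sum_erase _ _ (Finset.mem_univ z)]
    have hz0 : Complex.exp (((τ * E z) : ℝ) : ℂ) *
        (⟪ψ z, A v⟫_ℂ * Complex.exp ((-(τ * E z) : ℝ) : ℂ) *
          (starRingEnd ℂ) ⟪ψ z, A v⟫_ℂ) = ⟪v, A v⟫_ℂ ^ 2 := by
      rw [← hv] at *
      rw [hcz]
      rw [show Complex.exp (((τ * E z) : ℝ) : ℂ) *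
          (⟪v, A v⟫_ℂ * Complex.exp ((-(τ * E z) : ℝ) : ℂ) * ⟪v, A v⟫_ℂ)
          = (Complex.exp (((τ * E z) : ℝ) : ℂ) * Complex.exp ((-(τ * E z) : ℝ) : ℂ)) *
            ⟪v, A v⟫_ℂ ^ 2 by ring, ← Complex.exp_add, ← Complex.ofReal_add]
      norm_num
    rw [hz0]
    rw [add_sub_cancel_left]
    rw [Complex.ofReal_sum]
    exact Finset.sum_congr rfl fun n _ => hterm n
  -- real-valued reformulation
  set F : ℝ → ℝ := fun τ => τ * ∑ n ∈ Finset.univ.erase z,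
      ‖⟪ψ n, A v⟫_ℂ‖ ^ 2 * Real.exp (-((E n - E z) * τ)) with hFdef
  have hF : (fun τ : ℝ =>
      (τ : ℂ) * (⟪v, (NormedSpace.exp ((τ : ℂ) • H) * A * NormedSpace.exp (-(τ : ℂ) • H))
          (A v)⟫_ℂ - ⟪v, A v⟫_ℂ ^ 2)) = fun τ : ℝ => ((F τ : ℝ) : ℂ) := by
    funext τ
    rw [key τ, hFdef]
    push_cast
    ring
  have ha : ∀ n ∈ Finset.univ.erase z, 0 < E n - E z := fun n hn =>
    sub_pos.2 (hground n (Finset.ne_of_mem_erase hn))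
  have hint : ∀ n ∈ Finset.univ.erase z,
      IntegrableOn (fun τ : ℝ => τ * Real.exp (-((E n - E z) * τ))) (Set.Ioi 0) := by
    intro n hn
    have h := integrableOn_rpow_mul_exp_neg_mul_rpow (by norm_num : (-1:ℝ) < 1) zero_lt_one (ha n hn)
    refine h.congr_fun (fun x hx => ?_) measurableSet_Ioi
    simp only [Real.rpow_one, neg_mul]
  have hFsum : F = fun τ => ∑ n ∈ Finset.univ.erase z,
      ‖⟪ψ n, A v⟫_ℂ‖ ^ 2 * (τ * Real.exp (-((E n - E z) * τ))) := by
    funext τ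
    simp only [hFdef]
    rw [Finset.mul_sum]
    exact Finset.sum_congr rfl fun n _ => by ring
  have hFint : IntegrableOn F (Set.Ioi 0) := by
    rw [hFsum]
    exact integrable_finset_sum _ fun n hn => (hint n hn).const_mul _
  have hval : ∀ n ∈ Finset.univ.erase z,
      ∫ τ in Set.Ioi (0:ℝ), τ * Real.exp (-((E n - E z) * τ)) = 1 / (E n - E z) ^ 2 := by
    intro n hn
    have h2 := Real.integral_rpow_mul_exp_neg_mul_Ioi (by norm_num : (0:ℝ) < 2) (ha n hn)
    rw [show (2:ℝ) - 1 = 1 by norm_num] at h2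
    simp_rw [Real.rpow_one] at h2
    rw [Real.Gamma_two, mul_one] at h2
    rw [h2, show (2:ℝ) = ((2:ℕ):ℝ) by norm_num, Real.rpow_natCast]
    rw [one_div, inv_pow, one_div]
  have hIF : ∫ τ in Set.Ioi (0:ℝ), F τ
      = ∑ n ∈ Finset.univ.erase z, ‖⟪ψ n, A v⟫_ℂ‖ ^ 2 / (E n - E z) ^ 2 := by
    rw [hFsum]
    rw [integral_finset_sum _ fun n hn => (hint n hn).const_mul _]
    refine Finset.sum_congr rfl fun n hn => ?_
    rw [MeasureTheory.integral_const_mul, hval n hn, mul_one_div]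
  constructor
  · rw [hF]
    exact hFint.ofReal
  · rw [hF]
    have hoi : ∫ τ in Set.Ioi (0:ℝ), ((F τ : ℝ) : ℂ)
        = ((∫ τ in Set.Ioi (0:ℝ), F τ : ℝ) : ℂ) := integral_ofReal
    rw [hoi, hIF]
end
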